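/- Let f_w be an l-layer MPGNN on graphs with n nodes, with a diffusion matrix P ∈ ℝ^{n×n}, weights satisfying ‖U_i‖₂ ≤ M₁ for i ∈ [l−1] and ‖W_i‖₂ ≤ M₂ for i ∈ [l], entrywise L-Lipschitz nonlinearities φ_k, ρ_k, ψ_k with φ_k(0)=ρ_k(0)=ψ_k(0)=0, and input X ∈ ℝ^{n×h_0}. Set κ = L M₁ ‖X‖_F and τ = L³ M₂ ‖P‖₂. Then for every 1 ≤ j ≤ l−1, the node representation H_j satisfies ‖H_j‖_F ≤ κ · j if τ = 1, and ‖H_j‖_F ≤ κ · (τ^j − 1)/(τ − 1) if τ ≠ 1. -/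

import Mathlib

open MeasureTheory Matrix Finset

noncomputable section

/-- Spectral norm of a real matrix: the operator norm induced by Euclidean vector norms. -/
def specNorm {m n : Type*} [Fintype m] [Fintype n] [DecidableEq n] (A : Matrix m n ℝ) : ℝ :=
  ‖LinearMap.toContinuousLinearMap (Matrix.toEuclideanLin A)‖

/-- Frobenius norm of a real matrix. -/
def frobNorm {m n : Type*} [Fintype m] [Fintype n] (A : Matrix m n ℝ) : ℝ :=
  Real.sqrt (∑ i, ∑ j, (A i j) ^ 2)

/-- Euclidean norm of a finite real vector. -/
def euclNorm {n : Type*} [Fintype n] (v : n → ℝ) : ℝ :=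
  Real.sqrt (∑ i, (v i) ^ 2)

/-- Node representations of an MPGNN:
`H_0 = 0`, `H_{k+1} = φ_{k+1}(X U_{k+1} + ρ_{k+1}(P ψ_{k+1}(H_k) W_{k+1}))`
(we index weights and nonlinearities from `0`, so `W k`, `U k`, `φ k`, `ρ k`, `ψ k`
are the paper's `W_{k+1}`, `U_{k+1}`, `φ_{k+1}`, `ρ_{k+1}`, `ψ_{k+1}`). -/
def mpgnnRep {n : ℕ} (d : ℕ → ℕ) (φ ρ ψ : ℕ → ℝ → ℝ)
    (W : ∀ k : ℕ, Matrix (Fin (d k)) (Fin (d (k + 1))) ℝ)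
    (U : ∀ k : ℕ, Matrix (Fin (d 0)) (Fin (d (k + 1))) ℝ)
    (P : Matrix (Fin n) (Fin n) ℝ) (X : Matrix (Fin n) (Fin (d 0)) ℝ) :
    (k : ℕ) → Matrix (Fin n) (Fin (d k)) ℝ
  | 0 => 0
  | (k + 1) =>
      (X * U k + (P * (mpgnnRep d φ ρ ψ W U P X k).map (ψ k) * W k).map (ρ k)).map (φ k)

/-- Output (readout) of an `l`-layer MPGNN: `f_w(G) = H_l = (1/n) 1_n H_{l-1} W_l`. -/
def mpgnnOut {n : ℕ} (d : ℕ → ℕ) (φ ρ ψ : ℕ → ℝ → ℝ)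
    (W : ∀ k : ℕ, Matrix (Fin (d k)) (Fin (d (k + 1))) ℝ)
    (U : ∀ k : ℕ, Matrix (Fin (d 0)) (Fin (d (k + 1))) ℝ)
    (P : Matrix (Fin n) (Fin n) ℝ) (X : Matrix (Fin n) (Fin (d 0)) ℝ) :
    (l : ℕ) → Fin (d l) → ℝ
  | 0 => fun _ => 0
  | (l + 1) => fun j => (n : ℝ)⁻¹ * ∑ i, (mpgnnRep d φ ρ ψ W U P X l * W l) i j

open scoped Matrix.Norms.L2Operator

section AuxLemmas

set_option linter.unusedSectionVars false

variable {m n p : Type*} [Fintype m] [Fintype n] [Fintype p]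
  [DecidableEq m] [DecidableEq n] [DecidableEq p]

lemma specNorm_eq_l2 (A : Matrix m n ℝ) : specNorm A = ‖A‖ := rfl

lemma euclNorm_eq (v : n → ℝ) : euclNorm v = ‖(EuclideanSpace.equiv n ℝ).symm v‖ := by
  rw [euclNorm, EuclideanSpace.norm_eq]; simp [Real.norm_eq_abs, sq_abs]

lemma euclNorm_mulVec (A : Matrix m n ℝ) (x : n → ℝ) :
    euclNorm (A *ᵥ x) ≤ specNorm A * euclNorm x := by
  rw [euclNorm_eq, euclNorm_eq, specNorm_eq_l2]; exact Matrix.l2_opNorm_mulVec A ((EuclideanSpace.equiv n ℝ).symm x)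

lemma specNorm_nonneg (A : Matrix m n ℝ) : 0 ≤ specNorm A := norm_nonneg _

lemma frobNorm_nonneg (A : Matrix m n ℝ) : 0 ≤ frobNorm A := Real.sqrt_nonneg _

lemma specNorm_transpose (A : Matrix m n ℝ) : specNorm Aᵀ = specNorm A := by
  have h : Aᴴ = Aᵀ := by ext i j; rfl
  rw [specNorm_eq_l2, specNorm_eq_l2, ← Matrix.l2_opNorm_conjTranspose A, h]

lemma frobNorm_transpose (A : Matrix m n ℝ) : frobNorm Aᵀ = frobNorm A := by
  rw [frobNorm, frobNorm, Finset.sum_comm]; rfl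

lemma frobNorm_eq_eucl (A : Matrix m n ℝ) :
    frobNorm A = ‖(EuclideanSpace.equiv (m × n) ℝ).symm (fun p => A p.1 p.2)‖ := by
  rw [frobNorm, EuclideanSpace.norm_eq]
  congr 1
  rw [Fintype.sum_prod_type]
  simp [Real.norm_eq_abs, sq_abs]

lemma frobNorm_zero : frobNorm (0 : Matrix m n ℝ) = 0 := by
  simp [frobNorm]

lemma frobNorm_add_le (A B : Matrix m n ℝ) : frobNorm (A + B) ≤ frobNorm A + frobNorm B := by
  rw [frobNorm_eq_eucl, frobNorm_eq_eucl, frobNorm_eq_eucl]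
  have h : (EuclideanSpace.equiv (m × n) ℝ).symm (fun p => (A + B) p.1 p.2)
      = (EuclideanSpace.equiv (m × n) ℝ).symm (fun p => A p.1 p.2)
        + (EuclideanSpace.equiv (m × n) ℝ).symm (fun p => B p.1 p.2) := by
    ext p; simp [Matrix.add_apply]
  rw [h]; exact norm_add_le _ _

lemma frobNorm_map_le {L : ℝ} (hL : 0 ≤ L) (f : ℝ → ℝ) (hf : ∀ x, |f x| ≤ L * |x|)
    (A : Matrix m n ℝ) : frobNorm (A.map f) ≤ L * frobNorm A := by
  have h : ∑ i, ∑ j, ((A.map f) i j) ^ 2 ≤ L ^ 2 * ∑ i, ∑ j, (A i j) ^ 2 := by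
    rw [Finset.mul_sum]
    refine Finset.sum_le_sum fun i _ => ?_
    rw [Finset.mul_sum]
    refine Finset.sum_le_sum fun j _ => ?_
    calc ((A.map f) i j) ^ 2 = |f (A i j)| ^ 2 := by rw [sq_abs]; rfl
      _ ≤ (L * |A i j|) ^ 2 := pow_le_pow_left₀ (abs_nonneg _) (hf (A i j)) 2
      _ = L ^ 2 * (A i j) ^ 2 := by rw [mul_pow, sq_abs]
  calc frobNorm (A.map f) ≤ Real.sqrt (L ^ 2 * ∑ i, ∑ j, (A i j) ^ 2) :=
        Real.sqrt_le_sqrt h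
    _ = L * frobNorm A := by
        rw [Real.sqrt_mul (sq_nonneg L), Real.sqrt_sq hL]; rfl

lemma euclNorm_sq (v : n → ℝ) : euclNorm v ^ 2 = ∑ i, (v i) ^ 2 :=
  Real.sq_sqrt (by positivity)

lemma frobNorm_mul_le_left (A : Matrix m n ℝ) (B : Matrix n p ℝ) :
    frobNorm (A * B) ≤ specNorm A * frobNorm B := by
  have key : ∀ j, ∑ i, ((A * B) i j) ^ 2 ≤ specNorm A ^ 2 * ∑ i, (B i j) ^ 2 := by
    intro j
    have h2 : euclNorm (fun i => (A * B) i j) ≤ specNorm A * euclNorm (fun k => B k j) := by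
      have he : (fun i => (A * B) i j) = A *ᵥ (fun k => B k j) := rfl
      rw [he]; exact euclNorm_mulVec _ _
    calc ∑ i, ((A * B) i j) ^ 2 = euclNorm (fun i => (A * B) i j) ^ 2 := (euclNorm_sq _).symm
      _ ≤ (specNorm A * euclNorm (fun k => B k j)) ^ 2 :=
          pow_le_pow_left₀ (Real.sqrt_nonneg _) h2 2
      _ = specNorm A ^ 2 * ∑ i, (B i j) ^ 2 := by rw [mul_pow, euclNorm_sq]
  have e1 : ∑ i, ∑ j, ((A * B) i j) ^ 2 = ∑ j, ∑ i, ((A * B) i j) ^ 2 := Finset.sum_comm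
  have e2 : ∑ i, ∑ j, ((B : Matrix n p ℝ) i j) ^ 2 = ∑ j, ∑ i, (B i j) ^ 2 := Finset.sum_comm
  have hsum : ∑ i, ∑ j, ((A * B) i j) ^ 2 ≤ specNorm A ^ 2 * ∑ i, ∑ j, (B i j) ^ 2 := by
    rw [e1, e2, Finset.mul_sum]
    exact Finset.sum_le_sum fun j _ => key j
  calc frobNorm (A * B) ≤ Real.sqrt (specNorm A ^ 2 * ∑ i, ∑ j, (B i j) ^ 2) :=
        Real.sqrt_le_sqrt hsum
    _ = specNorm A * frobNorm B := by
        rw [Real.sqrt_mul (sq_nonneg _), Real.sqrt_sq (specNorm_nonneg A)]; rfl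

lemma frobNorm_mul_le_right (A : Matrix m n ℝ) (B : Matrix n p ℝ) :
    frobNorm (A * B) ≤ frobNorm A * specNorm B := by
  calc frobNorm (A * B) = frobNorm ((A * B)ᵀ) := (frobNorm_transpose _).symm
    _ = frobNorm (Bᵀ * Aᵀ) := by rw [Matrix.transpose_mul]
    _ ≤ specNorm Bᵀ * frobNorm Aᵀ := frobNorm_mul_le_left _ _
    _ = frobNorm A * specNorm B := by rw [specNorm_transpose, frobNorm_transpose, mul_comm]

end AuxLemmas

/-- Bound on the Frobenius norm of the node representations of an `l`-layer MPGNN: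
with `κ = L M₁ ‖X‖_F` and `τ = L³ M₂ ‖P‖₂`, for `1 ≤ j ≤ l-1` we have
`‖H_j‖_F ≤ κ j` if `τ = 1` and `‖H_j‖_F ≤ κ (τ^j - 1)/(τ - 1)` if `τ ≠ 1`. -/
theorem mpgnnRep_frobNorm_le (n l : ℕ) (d : ℕ → ℕ) (φ ρ ψ : ℕ → ℝ → ℝ)
    (W : ∀ k : ℕ, Matrix (Fin (d k)) (Fin (d (k + 1))) ℝ)
    (U : ∀ k : ℕ, Matrix (Fin (d 0)) (Fin (d (k + 1))) ℝ)
    (L M₁ M₂ : ℝ)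
    (hLipφ : ∀ k, k < l - 1 → ∀ x y : ℝ, |φ k x - φ k y| ≤ L * |x - y|)
    (hLipρ : ∀ k, k < l - 1 → ∀ x y : ℝ, |ρ k x - ρ k y| ≤ L * |x - y|)
    (hLipψ : ∀ k, k < l - 1 → ∀ x y : ℝ, |ψ k x - ψ k y| ≤ L * |x - y|)
    (hφ0 : ∀ k, k < l - 1 → φ k 0 = 0) (hρ0 : ∀ k, k < l - 1 → ρ k 0 = 0)
    (hψ0 : ∀ k, k < l - 1 → ψ k 0 = 0)
    (hU : ∀ k, k < l - 1 → specNorm (U k) ≤ M₁)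
    (hW : ∀ k, k < l → specNorm (W k) ≤ M₂)
    (P : Matrix (Fin n) (Fin n) ℝ) (X : Matrix (Fin n) (Fin (d 0)) ℝ)
    (j : ℕ) (hj1 : 1 ≤ j) (hjl : j ≤ l - 1) :
    (L ^ 3 * M₂ * specNorm P = 1 →
      frobNorm (mpgnnRep d φ ρ ψ W U P X j) ≤ L * M₁ * frobNorm X * j) ∧
    (L ^ 3 * M₂ * specNorm P ≠ 1 →
      frobNorm (mpgnnRep d φ ρ ψ W U P X j) ≤
        L * M₁ * frobNorm X *
          (((L ^ 3 * M₂ * specNorm P) ^ j - 1) / (L ^ 3 * M₂ * specNorm P - 1))) := by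
  have h0l1 : 0 < l - 1 := lt_of_lt_of_le hj1 hjl
  have h0l : 0 < l := by omega
  have hL0 : 0 ≤ L := by
    have h := hLipφ 0 h0l1 1 0
    have h2 := abs_nonneg (φ 0 1 - φ 0 0)
    simp only [sub_zero, abs_one, mul_one] at h
    linarith
  have hM1 : 0 ≤ M₁ := le_trans (specNorm_nonneg _) (hU 0 h0l1)
  have hM2 : 0 ≤ M₂ := le_trans (specNorm_nonneg _) (hW 0 h0l)
  set κ := L * M₁ * frobNorm X with hκdef
  set τ := L ^ 3 * M₂ * specNorm P with hτdef
  have hτ0 : 0 ≤ τ := by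
    rw [hτdef]
    have := specNorm_nonneg P
    positivity
  have hκ0 : 0 ≤ κ := by
    rw [hκdef]
    have := frobNorm_nonneg X
    positivity
  have hφb : ∀ k, k < l - 1 → ∀ x, |φ k x| ≤ L * |x| := fun k hk x => by
    have h := hLipφ k hk x 0; rwa [hφ0 k hk, sub_zero, sub_zero] at h
  have hρb : ∀ k, k < l - 1 → ∀ x, |ρ k x| ≤ L * |x| := fun k hk x => by
    have h := hLipρ k hk x 0; rwa [hρ0 k hk, sub_zero, sub_zero] at h
  have hψb : ∀ k, k < l - 1 → ∀ x, |ψ k x| ≤ L * |x| := fun k hk x => by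
    have h := hLipψ k hk x 0; rwa [hψ0 k hk, sub_zero, sub_zero] at h
  have key : ∀ k, k ≤ l - 1 →
      frobNorm (mpgnnRep d φ ρ ψ W U P X k) ≤ κ * ∑ i ∈ Finset.range k, τ ^ i := by
    intro k
    induction k with
    | zero =>
      intro _
      have h0 : mpgnnRep d φ ρ ψ W U P X 0 = 0 := rfl
      rw [h0, frobNorm_zero]
      simp
    | succ k ih =>
      intro hk1
      have hk : k < l - 1 := by omega
      have hkl : k < l := by omega
      have ihk := ih (by omega)
      set H := mpgnnRep d φ ρ ψ W U P X k with hHdef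
      have fH := frobNorm_nonneg H
      have b1 : frobNorm (H.map (ψ k)) ≤ L * frobNorm H :=
        frobNorm_map_le hL0 _ (hψb k hk) H
      have b2 : frobNorm (P * H.map (ψ k)) ≤ specNorm P * frobNorm (H.map (ψ k)) :=
        frobNorm_mul_le_left _ _
      have c2 : frobNorm (P * H.map (ψ k) * W k) ≤ specNorm P * (L * frobNorm H) * M₂ := by
        calc frobNorm (P * H.map (ψ k) * W k)
            ≤ frobNorm (P * H.map (ψ k)) * specNorm (W k) := frobNorm_mul_le_right _ _
          _ ≤ (specNorm P * (L * frobNorm H)) * M₂ := by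
              apply mul_le_mul _ (hW k hkl) (specNorm_nonneg _)
                (mul_nonneg (specNorm_nonneg P) (mul_nonneg hL0 fH))
              exact b2.trans (mul_le_mul_of_nonneg_left b1 (specNorm_nonneg P))
      have c3 : frobNorm ((P * H.map (ψ k) * W k).map (ρ k))
          ≤ L * (specNorm P * (L * frobNorm H) * M₂) :=
        (frobNorm_map_le hL0 _ (hρb k hk) _).trans (mul_le_mul_of_nonneg_left c2 hL0)
      have c4 : frobNorm (X * U k) ≤ frobNorm X * M₁ :=
        (frobNorm_mul_le_right _ _).trans
          (mul_le_mul_of_nonneg_left (hU k hk) (frobNorm_nonneg X))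
      have hrep : mpgnnRep d φ ρ ψ W U P X (k + 1)
          = (X * U k + (P * H.map (ψ k) * W k).map (ρ k)).map (φ k) := rfl
      have step : frobNorm (mpgnnRep d φ ρ ψ W U P X (k + 1)) ≤ κ + τ * frobNorm H := by
        rw [hrep]
        have hmain : frobNorm ((X * U k + (P * H.map (ψ k) * W k).map (ρ k)).map (φ k))
            ≤ L * (frobNorm X * M₁ + L * (specNorm P * (L * frobNorm H) * M₂)) := by
          refine (frobNorm_map_le hL0 _ (hφb k hk) _).trans
            (mul_le_mul_of_nonneg_left ?_ hL0)
          exact (frobNorm_add_le _ _).trans (add_le_add c4 c3)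
        calc frobNorm ((X * U k + (P * H.map (ψ k) * W k).map (ρ k)).map (φ k))
            ≤ L * (frobNorm X * M₁ + L * (specNorm P * (L * frobNorm H) * M₂)) := hmain
          _ = κ + τ * frobNorm H := by rw [hκdef, hτdef]; ring
      calc frobNorm (mpgnnRep d φ ρ ψ W U P X (k + 1)) ≤ κ + τ * frobNorm H := step
        _ ≤ κ + τ * (κ * ∑ i ∈ Finset.range k, τ ^ i) := by
            have := mul_le_mul_of_nonneg_left ihk hτ0
            linarith
        _ = κ * ∑ i ∈ Finset.range (k + 1), τ ^ i := by
            rw [geom_sum_succ]; ring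
  have hj := key j hjl
  constructor
  · intro h1
    rw [h1] at hj
    simpa using hj
  · intro h1
    rw [geom_sum_eq h1 j] at hj
    exact hj

end
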